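/- arXiv:1505.05206 — 7 statements merged into one kernel-verified Lean document; each statement's English description precedes it below -/
import Mathlib

section
/- For all integers b, c and every natural number a, ∑_{k ∈ ℤ} (−1)^k · C(b + k, c + k) · C(a, k) = (−1)^a · C(b, a + c). -/
/-- The generalized binomial coefficient `C(x, k)` for integers `x, k`:
`x(x-1)⋯(x-k+1)/k!` when `k ≥ 0` and `0` when `k < 0`. -/
noncomputable def zchoose (x k : ℤ) : ℤ := if 0 ≤ k then Ring.choose x k.toNat else 0

lemma zchoose_natCast (a k : ℕ) : zchoose (a : ℤ) (k : ℤ) = (a.choose k : ℤ) := by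
  simp [zchoose, Ring.choose_natCast]

lemma zchoose_neg {x k : ℤ} (h : k < 0) : zchoose x k = 0 := by
  simp [zchoose, not_le.mpr h]

lemma zchoose_nat_eq_zero {a : ℕ} {k : ℤ} (h : (a : ℤ) < k) : zchoose (a : ℤ) k = 0 := by
  rcases le_or_gt 0 k with hk | hk
  · lift k to ℕ using hk
    rw [zchoose_natCast, Nat.choose_eq_zero_of_lt (by exact_mod_cast h)]
    rfl
  · exact zchoose_neg hk

/-- Pascal's rule for `zchoose`. -/
lemma zchoose_pascal (b m : ℤ) : zchoose (b + 1) (m + 1) = zchoose b m + zchoose b (m + 1) := by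
  rcases le_or_gt 0 m with hm | hm
  · have hm1 : (0:ℤ) ≤ m + 1 := by omega
    have ht : (m + 1).toNat = m.toNat + 1 := by omega
    simp only [zchoose, if_pos hm, if_pos hm1, ht]
    exact Ring.choose_succ_succ b m.toNat
  · rcases eq_or_lt_of_le (by omega : m + 1 ≤ 0) with h0 | h0
    · rw [h0, zchoose_neg hm]
      simp [zchoose, Ring.choose_zero_right]
    · rw [zchoose_neg hm, zchoose_neg (by omega), zchoose_neg (by omega)]
      ring

lemma key (a : ℕ) : ∀ b c : ℤ,
    ∑ k ∈ Finset.range (a + 1),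
      (-1 : ℤ) ^ k * zchoose (b + k) (c + k) * (a.choose k : ℤ)
      = (-1 : ℤ) ^ a * zchoose b ((a : ℤ) + c) := by
  induction a with
  | zero => intro b c; simp
  | succ a ih =>
    intro b c
    rw [Finset.sum_range_succ']
    have h1 : ∀ k ∈ Finset.range (a + 1),
        (-1 : ℤ) ^ (k + 1) * zchoose (b + (k + 1 : ℕ)) (c + (k + 1 : ℕ))
            * ((a + 1).choose (k + 1) : ℤ)
          = (-1 : ℤ) ^ (k + 1) * zchoose (b + (k + 1 : ℕ)) (c + (k + 1 : ℕ))
              * (a.choose k : ℤ)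
            + (-1 : ℤ) ^ (k + 1) * zchoose (b + (k + 1 : ℕ)) (c + (k + 1 : ℕ))
              * (a.choose (k + 1) : ℤ) := by
      intro k _
      rw [Nat.choose_succ_succ]
      push_cast
      ring
    rw [Finset.sum_congr rfl h1, Finset.sum_add_distrib]
    -- second piece: shift back to sum from 0 to a+1
    have h2 : ∑ k ∈ Finset.range (a + 1),
        (-1 : ℤ) ^ (k + 1) * zchoose (b + (k + 1 : ℕ)) (c + (k + 1 : ℕ))
          * (a.choose (k + 1) : ℤ)
        + (-1 : ℤ) ^ 0 * zchoose (b + (0 : ℕ)) (c + (0 : ℕ)) * (a.choose 0 : ℤ)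
        = ∑ k ∈ Finset.range (a + 2),
            (-1 : ℤ) ^ k * zchoose (b + k) (c + k) * (a.choose k : ℤ) :=
      (Finset.sum_range_succ'
        (fun k => (-1 : ℤ) ^ k * zchoose (b + k) (c + k) * (a.choose k : ℤ)) (a + 1)).symm
    have h3 : ∑ k ∈ Finset.range (a + 2),
        (-1 : ℤ) ^ k * zchoose (b + k) (c + k) * (a.choose k : ℤ)
        = ∑ k ∈ Finset.range (a + 1),
            (-1 : ℤ) ^ k * zchoose (b + k) (c + k) * (a.choose k : ℤ) := by
      rw [Finset.sum_range_succ, Nat.choose_succ_self]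
      simp
    have h4 : ∑ k ∈ Finset.range (a + 1),
        (-1 : ℤ) ^ (k + 1) * zchoose (b + (k + 1 : ℕ)) (c + (k + 1 : ℕ))
          * (a.choose k : ℤ)
        = -∑ k ∈ Finset.range (a + 1),
            (-1 : ℤ) ^ k * zchoose ((b + 1) + k) ((c + 1) + k) * (a.choose k : ℤ) := by
      rw [← Finset.sum_neg_distrib]
      refine Finset.sum_congr rfl fun k _ => ?_
      have e1 : b + ((k : ℤ) + 1) = (b + 1) + k := by ring
      have e2 : c + ((k : ℤ) + 1) = (c + 1) + k := by ring
      push_cast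
      rw [e1, e2]
      ring
    have goal1 : ((a + 1 : ℕ) : ℤ) + c = ((a : ℤ) + c) + 1 := by push_cast; ring
    calc (∑ k ∈ Finset.range (a + 1),
            (-1 : ℤ) ^ (k + 1) * zchoose (b + (k + 1 : ℕ)) (c + (k + 1 : ℕ))
              * (a.choose k : ℤ)
          + ∑ k ∈ Finset.range (a + 1),
              (-1 : ℤ) ^ (k + 1) * zchoose (b + (k + 1 : ℕ)) (c + (k + 1 : ℕ))
                * (a.choose (k + 1) : ℤ))
          + (-1 : ℤ) ^ 0 * zchoose (b + (0 : ℕ)) (c + (0 : ℕ)) * ((a + 1).choose 0 : ℤ)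
        = (-∑ k ∈ Finset.range (a + 1),
              (-1 : ℤ) ^ k * zchoose ((b + 1) + k) ((c + 1) + k) * (a.choose k : ℤ))
          + ∑ k ∈ Finset.range (a + 2),
              (-1 : ℤ) ^ k * zchoose (b + k) (c + k) * (a.choose k : ℤ) := by
          rw [h4, ← h2]
          simp [Nat.choose_zero_right]
          ring
      _ = -((-1 : ℤ) ^ a * zchoose (b + 1) ((a : ℤ) + (c + 1)))
          + (-1 : ℤ) ^ a * zchoose b ((a : ℤ) + c) := by
          rw [h3, ih (b + 1) (c + 1), ih b c]
      _ = (-1 : ℤ) ^ (a + 1) * zchoose b (((a + 1 : ℕ) : ℤ) + c) := by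
          have := zchoose_pascal b ((a : ℤ) + c)
          have e : (a : ℤ) + (c + 1) = ((a : ℤ) + c) + 1 := by ring
          rw [goal1, e, this]
          ring

/-- For integers `b, c` and a natural number `a`,
`∑_{k ∈ ℤ} (−1)^k · C(b + k, c + k) · C(a, k) = (−1)^a · C(b, a + c)`. -/
theorem alternating_vandermonde_int (b c : ℤ) (a : ℕ) :
    ∑ᶠ k : ℤ, (k.negOnePow : ℤ) * zchoose (b + k) (c + k) * zchoose (a : ℤ) k
      = (-1 : ℤ) ^ a * zchoose b ((a : ℤ) + c) := by
  classical
  set f : ℤ → ℤ := fun k => (k.negOnePow : ℤ) * zchoose (b + k) (c + k) * zchoose (a : ℤ) k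
  have hsupp : Function.support f ⊆
      (Finset.image (fun n : ℕ => (n : ℤ)) (Finset.range (a + 1)) : Finset ℤ) := by
    intro k hk
    simp only [Function.mem_support, f] at hk
    simp only [Finset.coe_image, Set.mem_image, Finset.mem_coe, Finset.mem_range]
    rcases lt_or_ge k 0 with h0 | h0
    · exact absurd (by rw [zchoose_neg h0]; ring) hk
    rcases lt_or_ge (a : ℤ) k with h1 | h1
    · exact absurd (by rw [zchoose_nat_eq_zero h1]; ring) hk
    lift k to ℕ using h0
    exact ⟨k, by omega, rfl⟩
  rw [show (∑ᶠ k : ℤ, (k.negOnePow : ℤ) * zchoose (b + k) (c + k) * zchoose (a : ℤ) k)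
      = ∑ᶠ k : ℤ, f k from rfl,
    finsum_eq_sum_of_support_subset f hsupp,
    Finset.sum_image (by intro x _ y _ h; simp only at h; exact_mod_cast h)]
  have : ∀ k ∈ Finset.range (a + 1),
      f (k : ℤ) = (-1 : ℤ) ^ k * zchoose (b + k) (c + k) * (a.choose k : ℤ) := by
    intro k _
    simp only [f, Int.coe_negOnePow_natCast, zchoose_natCast]
  rw [Finset.sum_congr rfl this]
  exact key a b c
end

section
/- Let F, G, J be integers with 2 ≤ J, 2 ≤ G, and G + J ≤ F + 1. Then C(F−1, G−1) · C(F−G+1, J−1) = C(F−J, G−2) · C(F−1, J−2) + C(F−J, G−1) · C(F, J−1). -/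
open Nat in
private lemma nat_id_STS (a b c : ℕ) :
    (Nat.choose (a+b+c+2) (a+1) * Nat.choose (b+c+2) (b+1) : ℚ)
      = Nat.choose (a+c+1) a * Nat.choose (a+b+c+2) b
        + Nat.choose (a+c+1) (a+1) * Nat.choose (a+b+c+3) (b+1) := by
  rw [Nat.cast_choose ℚ (by omega : a+1 ≤ a+b+c+2),
      Nat.cast_choose ℚ (by omega : b+1 ≤ b+c+2),
      Nat.cast_choose ℚ (by omega : a ≤ a+c+1),
      Nat.cast_choose ℚ (by omega : b ≤ a+b+c+2),
      Nat.cast_choose ℚ (by omega : a+1 ≤ a+c+1),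
      Nat.cast_choose ℚ (by omega : b+1 ≤ a+b+c+3)]
  have h1 : a+b+c+2-(a+1) = b+c+1 := by omega
  have h2 : b+c+2-(b+1) = c+1 := by omega
  have h3 : a+c+1-a = c+1 := by omega
  have h4 : a+b+c+2-b = a+c+2 := by omega
  have h5 : a+c+1-(a+1) = c := by omega
  have h6 : a+b+c+3-(b+1) = a+c+2 := by omega
  rw [h1, h2, h3, h4, h5, h6]
  have e1 : (a+b+c+3)! = (a+b+c+3) * (a+b+c+2)! := Nat.factorial_succ _
  have e2 : (a+c+2)! = (a+c+2) * (a+c+1)! := Nat.factorial_succ _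
  have e3 : (b+c+2)! = (b+c+2) * (b+c+1)! := Nat.factorial_succ _
  have e4 : (a+1)! = (a+1) * a ! := Nat.factorial_succ _
  have e5 : (b+1)! = (b+1) * b ! := Nat.factorial_succ _
  have e6 : (c+1)! = (c+1) * c ! := Nat.factorial_succ _
  rw [e1, e2, e3, e4, e5, e6]
  push_cast
  have p1 : ((a+b+c+2)! : ℚ) ≠ 0 := by exact_mod_cast (Nat.factorial_pos _).ne'
  have p2 : ((b+c+1)! : ℚ) ≠ 0 := by exact_mod_cast (Nat.factorial_pos _).ne'
  have p3 : ((a+c+1)! : ℚ) ≠ 0 := by exact_mod_cast (Nat.factorial_pos _).ne'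
  have p4 : (a ! : ℚ) ≠ 0 := by exact_mod_cast (Nat.factorial_pos _).ne'
  have p5 : (b ! : ℚ) ≠ 0 := by exact_mod_cast (Nat.factorial_pos _).ne'
  have p6 : (c ! : ℚ) ≠ 0 := by exact_mod_cast (Nat.factorial_pos _).ne'
  field_simp
  ring

private lemma zchoose_natCast_STS (n k : ℕ) : zchoose n k = n.choose k := by
  simp [zchoose, Ring.choose_natCast]

/-- For integers `F, G, J` with `2 ≤ J`, `2 ≤ G`, and `G + J ≤ F + 1`,
`C(F−1, G−1) · C(F−G+1, J−1) = C(F−J, G−2) · C(F−1, J−2) + C(F−J, G−1) · C(F, J−1)`. -/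
theorem binomial_identity_STS (F G J : ℤ) (hJ : 2 ≤ J) (hG : 2 ≤ G) (hF : G + J ≤ F + 1) :
    zchoose (F - 1) (G - 1) * zchoose (F - G + 1) (J - 1)
      = zchoose (F - J) (G - 2) * zchoose (F - 1) (J - 2)
        + zchoose (F - J) (G - 1) * zchoose F (J - 1) := by
  obtain ⟨a, rfl⟩ : ∃ a : ℕ, G = a + 2 := ⟨(G-2).toNat, by omega⟩
  obtain ⟨b, rfl⟩ : ∃ b : ℕ, J = b + 2 := ⟨(J-2).toNat, by omega⟩
  obtain ⟨c, rfl⟩ : ∃ c : ℕ, F = a + b + c + 3 := ⟨(F - a - b - 3).toNat, by omega⟩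
  rw [show ((a:ℤ)+b+c+3) - 1 = ((a+b+c+2 : ℕ) : ℤ) by push_cast; ring,
      show ((a:ℤ)+2) - 1 = ((a+1 : ℕ) : ℤ) by push_cast; ring,
      show ((a:ℤ)+b+c+3) - ((a:ℤ)+2) + 1 = ((b+c+2 : ℕ) : ℤ) by push_cast; ring,
      show ((b:ℤ)+2) - 1 = ((b+1 : ℕ) : ℤ) by push_cast; ring,
      show ((a:ℤ)+b+c+3) - ((b:ℤ)+2) = ((a+c+1 : ℕ) : ℤ) by push_cast; ring,
      show ((a:ℤ)+2) - 2 = ((a : ℕ) : ℤ) by ring,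
      show ((b:ℤ)+2) - 2 = ((b : ℕ) : ℤ) by ring,
      show ((a:ℤ)+b+c+3) = ((a+b+c+3 : ℕ) : ℤ) by push_cast; ring]
  rw [zchoose_natCast_STS, zchoose_natCast_STS, zchoose_natCast_STS,
      zchoose_natCast_STS, zchoose_natCast_STS, zchoose_natCast_STS]
  exact_mod_cast nat_id_STS a b c
end

section
/- Let f, g, L be integers with 1 ≤ g ≤ f. Then (−1)^g · [L = 0] · [2 ≤ f] = C(f−2, L) · C(L−1, g−2) + ∑_{ℓ ≤ f−g−2} C(f−g, g−L+ℓ) · C(g+ℓ−1, ℓ) − ∑_{L−g+1 ≤ ℓ} C(f, 2ℓ+2g−L) · C(g+ℓ−1, ℓ), where [P] is 1 if P holds and 0 otherwise, and both sums range over integers ℓ (only finitely many terms are nonzero). -/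
namespace ZCAux

lemma zc_neg (x : ℤ) {k : ℤ} (hk : k < 0) : zchoose x k = 0 := by
  simp [zchoose, not_le.mpr hk]

lemma zc_of_nonneg (x : ℤ) {k : ℤ} (hk : 0 ≤ k) : zchoose x k = Ring.choose x k.toNat := by
  simp [zchoose, hk]

lemma zc_zero (x : ℤ) : zchoose x 0 = 1 := by
  simp [zchoose, Ring.choose_zero_right]

lemma zc_one (x : ℤ) : zchoose x 1 = x := by
  simpa [zchoose] using Ring.choose_one_right x

lemma zc_nat (n m : ℕ) : zchoose (n : ℤ) (m : ℤ) = (n.choose m : ℤ) := by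
  simp [zchoose, Ring.choose_natCast]

lemma pascal (x k : ℤ) : zchoose x k = zchoose (x-1) (k-1) + zchoose (x-1) k := by
  rcases lt_trichotomy k 0 with h | h | h
  · rw [zc_neg _ h, zc_neg _ (by omega : k - 1 < 0), zc_neg _ h]; ring
  · subst h
    rw [zc_zero, zc_neg _ (by omega : (0:ℤ) - 1 < 0), zc_zero]; ring
  · obtain ⟨m, rfl⟩ : ∃ m : ℕ, k = (m : ℤ) + 1 := ⟨(k-1).toNat, by omega⟩
    rw [zc_of_nonneg _ (by positivity), zc_of_nonneg _ (by omega), zc_of_nonneg _ (by omega)]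
    have h1 : ((m : ℤ) + 1).toNat = m + 1 := by omega
    have h2 : ((m : ℤ) + 1 - 1).toNat = m := by omega
    have h3 : ((m : ℤ)).toNat = m := by omega
    rw [h1, h2]
    have := Ring.choose_succ_succ (x - 1) m
    rw [sub_add_cancel] at this
    rw [this]

lemma zc_eq_zero_of_lt {x k : ℤ} (hx : 0 ≤ x) (h : x < k) : zchoose x k = 0 := by
  obtain ⟨n, rfl⟩ := Int.eq_ofNat_of_zero_le hx
  obtain ⟨m, rfl⟩ : ∃ m : ℕ, k = (m : ℤ) := ⟨k.toNat, by omega⟩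
  rw [zc_nat, Nat.choose_eq_zero_of_lt (by omega), Nat.cast_zero]

lemma zc_self {x : ℤ} (hx : 0 ≤ x) : zchoose x x = 1 := by
  obtain ⟨n, rfl⟩ := Int.eq_ofNat_of_zero_le hx
  rw [zc_nat, Nat.choose_self, Nat.cast_one]

lemma zc_symm {x : ℤ} (hx : 0 ≤ x) (k : ℤ) : zchoose x k = zchoose x (x - k) := by
  rcases lt_trichotomy k 0 with h | h | h
  · rw [zc_neg _ h, zc_eq_zero_of_lt hx (by omega)]
  · subst h; rw [zc_zero, sub_zero, zc_self hx]
  · rcases le_or_gt k x with h2 | h2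
    · obtain ⟨n, rfl⟩ := Int.eq_ofNat_of_zero_le hx
      obtain ⟨m, rfl⟩ : ∃ m : ℕ, k = (m : ℤ) := ⟨k.toNat, by omega⟩
      have : (n : ℤ) - m = ((n - m : ℕ) : ℤ) := by omega
      rw [this, zc_nat, zc_nat, ← Nat.choose_symm (by omega : m ≤ n)]
    · rw [zc_eq_zero_of_lt hx h2, zc_neg _ (by omega)]

lemma zc_neg_one_nat (m : ℕ) : zchoose (-1) (m : ℤ) = (-1 : ℤ)^m := by
  induction m with
  | zero => simpa using zc_zero (-1)
  | succ m ih =>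
    have hp := pascal 0 ((m : ℤ) + 1)
    rw [zc_eq_zero_of_lt le_rfl (by positivity)] at hp
    have h1 : (0:ℤ) - 1 = -1 := by ring
    have h2 : (m : ℤ) + 1 - 1 = (m : ℤ) := by ring
    rw [h1, h2, ih] at hp
    have : zchoose (-1) ((m:ℤ)+1) = -(-1:ℤ)^m := by linarith
    rw [show ((m+1 : ℕ) : ℤ) = (m : ℤ) + 1 by push_cast; ring, this]
    ring

lemma trinomial {x k j : ℤ} (hx : 0 ≤ x) (hk : 0 ≤ k) (hj : 0 ≤ j) :
    zchoose x k * zchoose k j = zchoose x j * zchoose (x - j) (k - j) := by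
  obtain ⟨n, rfl⟩ := Int.eq_ofNat_of_zero_le hx
  obtain ⟨a, rfl⟩ := Int.eq_ofNat_of_zero_le hk
  obtain ⟨b, rfl⟩ := Int.eq_ofNat_of_zero_le hj
  by_cases hba : b ≤ a
  · by_cases han : a ≤ n
    · have e1 : (n : ℤ) - b = ((n - b : ℕ) : ℤ) := by omega
      have e2 : (a : ℤ) - b = ((a - b : ℕ) : ℤ) := by omega
      rw [e1, e2, zc_nat, zc_nat, zc_nat, zc_nat]
      exact_mod_cast congrArg (Nat.cast : ℕ → ℤ) (Nat.choose_mul (n := n) hba)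
    · have h2 : zchoose (n : ℤ) (a : ℤ) = 0 := zc_eq_zero_of_lt (by positivity) (by omega)
      rw [h2, zero_mul]
      rcases le_or_gt (b : ℤ) (n : ℤ) with h | h
      · have h3 : zchoose ((n:ℤ) - b) ((a:ℤ) - b) = 0 := zc_eq_zero_of_lt (by omega) (by omega)
        rw [h3, mul_zero]
      · have h3 : zchoose (n : ℤ) (b : ℤ) = 0 := zc_eq_zero_of_lt (by positivity) h
        rw [h3, zero_mul]
  · have h2 : zchoose (a : ℤ) (b : ℤ) = 0 := zc_eq_zero_of_lt (by positivity) (by omega)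
    have h3 : zchoose ((n:ℤ) - b) ((a:ℤ) - b) = 0 := zc_neg _ (by omega)
    rw [h2, h3, mul_zero, mul_zero]

lemma negOnePow_eq {g : ℤ} (hg : 2 ≤ g) : (g.negOnePow : ℤ) = zchoose (-1) (g - 2) := by
  obtain ⟨n, hn⟩ : ∃ n : ℕ, g - 2 = (n : ℤ) := ⟨(g-2).toNat, by omega⟩
  rw [hn, zc_neg_one_nat]
  have : g = (n : ℤ) + 2 := by omega
  rw [this, Int.negOnePow_add]
  have h2 : ((2:ℤ)).negOnePow = 1 := by
    rw [show (2:ℤ) = 2 * 1 by ring, Int.negOnePow_two_mul]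
  rw [h2, mul_one, Int.coe_negOnePow_natCast]


lemma pascal' (x k x' k' : ℤ) (hx : x' = x - 1) (hk : k' = k - 1) :
    zchoose x k = zchoose x' k' + zchoose x' k := by
  subst hx; subst hk; exact pascal x k

lemma zc_symm' (x k k' : ℤ) (hx : 0 ≤ x) (h : k' = x - k) : zchoose x k = zchoose x k' := by
  subst h; exact zc_symm hx k

lemma trinomial' (x k j a b : ℤ) (hx : 0 ≤ x) (hk : 0 ≤ k) (hj : 0 ≤ j)
    (ha : a = x - j) (hb : b = k - j) :
    zchoose x k * zchoose k j = zchoose x j * zchoose a b := by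
  subst ha; subst hb; exact trinomial hx hk hj

lemma star (f g L : ℤ) (hg : 1 ≤ g) (hgf : g ≤ f) :
    zchoose (f-2) (L-1) * zchoose (L-1) (g-2)
      + (g.negOnePow : ℤ) * (if L + 1 = 0 then 1 else 0) * (if 2 ≤ f then 1 else 0)
      - zchoose (f-2) (L+1) * zchoose L (g-2)
      + zchoose (f-g+1) (f-L-1) * zchoose (f-2) (f-g-1)
      - zchoose f (L+1) * zchoose L (L-g+1)
      = (g.negOnePow : ℤ) * (if L = 0 then 1 else 0) *
        ((if 2 ≤ f + 1 then 1 else 0) - (if 2 ≤ f then 1 else 0)) := by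
  by_cases hf2 : 2 ≤ f
  · rw [if_pos hf2, if_pos (by omega : 2 ≤ f + 1)]
    rcases lt_trichotomy L 0 with hL | hL | hL
    · by_cases hLm1 : L = -1
      · subst hLm1
        rw [if_pos (by norm_num : (-1:ℤ) + 1 = 0), if_neg (by norm_num : ¬ ((-1:ℤ) = 0))]
        have hA1 : zchoose (f-2) (-1-1) = 0 := zc_neg _ (by omega)
        have hA5 : zchoose (-1) (-1-g+1) = 0 := zc_neg _ (by omega)
        have hA3a : zchoose (f-2) (-1+1) = 1 := by
          rw [show (-1:ℤ)+1 = 0 by ring]; exact zc_zero _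
        rw [hA1, hA5, hA3a, show f - (-1) - 1 = f by ring]
        by_cases hg1 : g = 1
        · subst hg1
          have h4a : zchoose (f-1+1) f = 1 := by
            rw [show f - 1 + 1 = f by ring]; exact zc_self (by omega)
          have h4b : zchoose (f-2) (f-1-1) = 1 := by
            rw [show f - 1 - 1 = f - 2 by ring]; exact zc_self (by omega)
          have h3 : zchoose (-1) ((1:ℤ)-2) = 0 := zc_neg _ (by omega)
          rw [h4a, h4b, h3, Int.negOnePow_one]
          push_cast
          ring
        · have hA4 : zchoose (f-g+1) f = 0 := zc_eq_zero_of_lt (by omega) (by omega)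
          rw [hA4, negOnePow_eq (by omega : 2 ≤ g)]
          ring
      · have hL2 : L ≤ -2 := by omega
        have hA1 : zchoose (f-2) (L-1) = 0 := zc_neg _ (by omega)
        have hA3 : zchoose (f-2) (L+1) = 0 := zc_neg _ (by omega)
        have hA4 : zchoose (f-g+1) (f-L-1) = 0 := zc_eq_zero_of_lt (by omega) (by omega)
        have hA5 : zchoose L (L-g+1) = 0 := zc_neg _ (by omega)
        rw [hA1, hA3, hA4, hA5, if_neg (by omega : ¬ (L + 1 = 0)),
          if_neg (by omega : ¬ (L = 0))]
        ring
    · subst hL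
      rw [if_neg (by omega : ¬ ((0:ℤ) + 1 = 0))]
      have hA1 : zchoose (f-2) ((0:ℤ)-1) = 0 := zc_neg _ (by omega)
      rw [hA1]
      rcases lt_trichotomy g 2 with hg1 | hg2 | hg3
      · have hg1 : g = 1 := by omega
        subst hg1
        have hA3 : zchoose (0:ℤ) ((1:ℤ)-2) = 0 := zc_neg _ (by omega)
        have hA4a : zchoose (f-1+1) (f-0-1) = f := by
          rw [zc_symm' (f-1+1) (f-0-1) 1 (by omega) (by ring), zc_one]
          ring
        have hA4b : zchoose (f-2) (f-1-1) = 1 := by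
          rw [show f-1-1 = f-2 by ring]; exact zc_self (by omega)
        have hA5a : zchoose f ((0:ℤ)+1) = f := by
          rw [show (0:ℤ)+1 = 1 by ring, zc_one]
        have hA5b : zchoose (0:ℤ) (0-1+1) = 1 := by
          rw [show (0:ℤ)-1+1 = 0 by ring]; exact zc_zero _
        rw [hA3, hA4a, hA4b, hA5a, hA5b]
        ring
      · subst hg2
        have hA3a : zchoose (f-2) ((0:ℤ)+1) = f - 2 := by
          rw [show (0:ℤ)+1 = 1 by ring, zc_one]
        have hA3b : zchoose (0:ℤ) ((2:ℤ)-2) = 1 := by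
          rw [show (2:ℤ)-2 = 0 by ring]; exact zc_zero _
        have hA4a : zchoose (f-2+1) (f-0-1) = 1 := by
          rw [show f-2+1 = f-1 by ring, show f-0-1 = f-1 by ring]; exact zc_self (by omega)
        have hA4b : zchoose (f-2) (f-2-1) = f - 2 := by
          rw [zc_symm' (f-2) (f-2-1) 1 (by omega) (by ring), zc_one]
        have hA5b : zchoose (0:ℤ) (0-2+1) = 0 := zc_neg _ (by omega)
        rw [hA3a, hA3b, hA4a, hA4b, hA5b]
        ring
      · have hA3b : zchoose (0:ℤ) (g-2) = 0 := zc_eq_zero_of_lt le_rfl (by omega)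
        have hA4a : zchoose (f-g+1) (f-0-1) = 0 := zc_eq_zero_of_lt (by omega) (by omega)
        have hA5b : zchoose (0:ℤ) (0-g+1) = 0 := zc_neg _ (by omega)
        rw [hA3b, hA4a, hA5b]
        ring
    · rw [if_neg (by omega : ¬ (L + 1 = 0)), if_neg (by omega : ¬ (L = 0))]
      rw [zc_symm' (f-g+1) (f-L-1) (L-g+2) (by omega) (by ring),
          zc_symm' (f-2) (f-g-1) (g-1) (by omega) (by ring),
          zc_symm' L (L-g+1) (g-1) (by omega) (by ring)]
      have p1 := pascal' f (L+1) (f-1) L rfl (by ring)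
      have p2 := pascal' (f-1) L (f-2) (L-1) (by ring) rfl
      have p3 := pascal' (f-1) (L+1) (f-2) L (by ring) (by ring)
      have q1 := pascal' (L+1) (g-1) L (g-2) (by ring) (by ring)
      have q2 := pascal' L (g-1) (L-1) (g-2) rfl (by ring)
      have r1 := pascal' (f-g+1) (L-g+2) (f-g) (L-g+1) (by ring) (by ring)
      have r2 := pascal' (f-g) (L-g+1) (f-g-1) (L-g) rfl (by ring)
      have r3 := pascal' (f-g) (L-g+2) (f-g-1) (L-g+1) rfl (by ring)
      have t1 := trinomial' (f-2) (L+1) (g-1) (f-g-1) (L-g+2)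
        (by omega) (by omega) (by omega) (by ring) (by ring)
      have t2 := trinomial' (f-2) L (g-1) (f-g-1) (L-g+1)
        (by omega) (by omega) (by omega) (by ring) (by ring)
      have t3 := trinomial' (f-2) (L-1) (g-1) (f-g-1) (L-g)
        (by omega) (by omega) (by omega) (by ring) (by ring)
      linear_combination (-(zchoose L (g-1))) * p1 + (-(zchoose L (g-1))) * p2
        + (-(zchoose L (g-1))) * p3 + (-(zchoose (f-2) (L-1))) * q2
        + (zchoose (f-2) (L+1)) * q1
        + (zchoose (f-2) (g-1)) * r1 + (zchoose (f-2) (g-1)) * r2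
        + (zchoose (f-2) (g-1)) * r3 - t3 - 2 * t2 - t1
  · have hf1 : f = 1 := by omega
    have hg1 : g = 1 := by omega
    subst hf1; subst hg1
    rw [if_neg hf2, if_pos (by norm_num : (2:ℤ) ≤ 1 + 1)]
    have hA1 : zchoose (L-1) ((1:ℤ)-2) = 0 := zc_neg _ (by omega)
    have hA3 : zchoose L ((1:ℤ)-2) = 0 := zc_neg _ (by omega)
    have hA4 : zchoose ((1:ℤ)-2) (1-1-1) = 0 := zc_neg _ (by omega)
    rw [hA1, hA3, hA4, Int.negOnePow_one, show L - 1 + 1 = L by ring]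
    rcases lt_trichotomy L 0 with hL | hL | hL
    · have h5 : zchoose L L = 0 := zc_neg _ hL
      rw [h5, if_neg (by omega : ¬ (L = 0))]
      push_cast
      ring
    · subst hL
      rw [if_pos rfl, show (0:ℤ)+1 = 1 by ring, zc_one 1, zc_zero]
      push_cast
      ring
    · have h5 : zchoose 1 (L+1) = 0 := zc_eq_zero_of_lt (by norm_num) (by omega)
      rw [h5, if_neg (by omega : ¬ (L = 0))]
      push_cast
      ring


noncomputable def s1 (f g L ℓ : ℤ) : ℤ :=
  if ℓ ≤ f - g - 2 then zchoose (f - g) (g - L + ℓ) * zchoose (g + ℓ - 1) ℓ else 0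

noncomputable def s2 (f g L ℓ : ℤ) : ℤ :=
  if L - g + 1 ≤ ℓ then zchoose f (2 * ℓ + 2 * g - L) * zchoose (g + ℓ - 1) ℓ else 0

noncomputable def S1 (f g L : ℤ) : ℤ := ∑ᶠ ℓ : ℤ, s1 f g L ℓ
noncomputable def S2 (f g L : ℤ) : ℤ := ∑ᶠ ℓ : ℤ, s2 f g L ℓ

lemma s1_zero {f g L ℓ : ℤ} (h : ℓ < 0 ∨ f - g - 2 < ℓ) : s1 f g L ℓ = 0 := by
  unfold s1; split_ifs with hc
  · rcases h with h | h
    · rw [zc_neg _ h, mul_zero]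
    · omega
  · rfl

lemma s2_zero {f g L ℓ : ℤ} (hf : 0 ≤ f) (h : ℓ < 0 ∨ f < 2*ℓ+2*g-L) : s2 f g L ℓ = 0 := by
  unfold s2; split_ifs with hc
  · rcases h with h | h
    · rw [zc_neg _ h, mul_zero]
    · rw [zc_eq_zero_of_lt hf h, zero_mul]
  · rfl

lemma S1_eq_sum (f g L M : ℤ) (hM : f - g - 2 ≤ M) :
    S1 f g L = ∑ ℓ ∈ Finset.Icc 0 M, s1 f g L ℓ := by
  apply finsum_eq_finset_sum_of_support_subset
  intro ℓ hℓ
  simp only [Finset.coe_Icc, Set.mem_Icc]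
  by_contra hcon
  exact hℓ (s1_zero (by omega))

lemma S2_eq_sum (f g L M : ℤ) (hf : 0 ≤ f) (hg : 1 ≤ g) (hM : f + L.natAbs ≤ M) :
    S2 f g L = ∑ ℓ ∈ Finset.Icc 0 M, s2 f g L ℓ := by
  apply finsum_eq_finset_sum_of_support_subset
  intro ℓ hℓ
  simp only [Finset.coe_Icc, Set.mem_Icc]
  by_contra hcon
  refine hℓ (s2_zero hf ?_)
  omega

lemma S1_step (f g L : ℤ) (hg : 1 ≤ g) (hgf : g ≤ f) :
    S1 (f+1) g L = S1 f g L + S1 f g (L+1)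
      + zchoose (f-g+1) (f-L-1) * zchoose (f-2) (f-g-1) := by
  have key : ∀ ℓ : ℤ, s1 (f+1) g L ℓ = s1 f g L ℓ + s1 f g (L+1) ℓ
      + (if ℓ = f - g - 1 then zchoose (f-g+1) (f-L-1) * zchoose (g+ℓ-1) ℓ else 0) := by
    intro ℓ
    unfold s1
    by_cases h1 : ℓ ≤ f - g - 2
    · rw [if_pos (by omega : ℓ ≤ f + 1 - g - 2), if_pos h1, if_pos h1,
        if_neg (by omega : ¬ (ℓ = f - g - 1)),
        pascal' (f+1-g) (g-L+ℓ) (f-g) (g-(L+1)+ℓ) (by ring) (by ring)]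
      ring
    · by_cases h2 : ℓ = f - g - 1
      · subst h2
        rw [if_pos (by omega : f - g - 1 ≤ f + 1 - g - 2), if_neg h1, if_neg h1, if_pos rfl,
          show f + 1 - g = f - g + 1 by ring, show g - L + (f - g - 1) = f - L - 1 by ring]
        ring
      · rw [if_neg (by omega : ¬ (ℓ ≤ f + 1 - g - 2)), if_neg h1, if_neg h1, if_neg h2]
        ring
  set M : ℤ := f + 2 + L.natAbs with hM
  have e0 : S1 (f+1) g L = ∑ ℓ ∈ Finset.Icc 0 M, s1 (f+1) g L ℓ :=
    S1_eq_sum _ _ _ _ (by omega)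
  have e1 : S1 f g L = ∑ ℓ ∈ Finset.Icc 0 M, s1 f g L ℓ := S1_eq_sum _ _ _ _ (by omega)
  have e2 : S1 f g (L+1) = ∑ ℓ ∈ Finset.Icc 0 M, s1 f g (L+1) ℓ := S1_eq_sum _ _ _ _ (by omega)
  have e3 : (∑ ℓ ∈ Finset.Icc 0 M, (if ℓ = f - g - 1 then
      zchoose (f-g+1) (f-L-1) * zchoose (g+ℓ-1) ℓ else 0))
      = zchoose (f-g+1) (f-L-1) * zchoose (f-2) (f-g-1) := by
    rw [Finset.sum_ite_eq' (Finset.Icc 0 M) (f - g - 1)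
      (fun ℓ => zchoose (f-g+1) (f-L-1) * zchoose (g+ℓ-1) ℓ)]
    by_cases hmem : f - g - 1 ∈ Finset.Icc 0 M
    · rw [if_pos hmem, show g + (f - g - 1) - 1 = f - 2 by ring]
    · rw [if_neg hmem]
      have h0 : f - g - 1 < 0 := by
        simp only [Finset.mem_Icc] at hmem; omega
      rw [zc_neg _ h0, mul_zero]
  rw [e0, e1, e2, ← e3, ← Finset.sum_add_distrib, ← Finset.sum_add_distrib]
  exact Finset.sum_congr rfl (fun ℓ _ => key ℓ)

lemma S2_step (f g L : ℤ) (hg : 1 ≤ g) (hgf : g ≤ f) :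
    S2 (f+1) g L = S2 f g L + S2 f g (L+1) + zchoose f (L+1) * zchoose L (L-g+1) := by
  have key : ∀ ℓ : ℤ, s2 (f+1) g L ℓ = s2 f g L ℓ + s2 f g (L+1) ℓ
      + (if ℓ = L - g + 1 then zchoose f (L+1) * zchoose (g+ℓ-1) ℓ else 0) := by
    intro ℓ
    unfold s2
    by_cases h1 : L - g + 2 ≤ ℓ
    · rw [if_pos (by omega : L - g + 1 ≤ ℓ), if_pos (by omega : L - g + 1 ≤ ℓ),
        if_pos (by omega : L + 1 - g + 1 ≤ ℓ), if_neg (by omega : ¬ (ℓ = L - g + 1)),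
        pascal' (f+1) (2*ℓ+2*g-L) f (2*ℓ+2*g-(L+1)) (by ring) (by ring)]
      ring
    · by_cases h2 : ℓ = L - g + 1
      · subst h2
        rw [if_pos (by omega : L - g + 1 ≤ L - g + 1),
          if_pos (by omega : L - g + 1 ≤ L - g + 1),
          if_neg (by omega : ¬ (L + 1 - g + 1 ≤ L - g + 1)), if_pos rfl,
          show 2*(L-g+1)+2*g-L = L + 2 by ring,
          pascal' (f+1) (L+2) f (L+1) (by ring) (by ring)]
        ring
      · rw [if_neg (by omega : ¬ (L - g + 1 ≤ ℓ)), if_neg (by omega : ¬ (L - g + 1 ≤ ℓ)),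
          if_neg (by omega : ¬ (L + 1 - g + 1 ≤ ℓ)), if_neg h2]
        ring
  set M : ℤ := f + 2 + L.natAbs + (L+1).natAbs with hM
  have e0 : S2 (f+1) g L = ∑ ℓ ∈ Finset.Icc 0 M, s2 (f+1) g L ℓ :=
    S2_eq_sum _ _ _ _ (by omega) hg (by omega)
  have e1 : S2 f g L = ∑ ℓ ∈ Finset.Icc 0 M, s2 f g L ℓ :=
    S2_eq_sum _ _ _ _ (by omega) hg (by omega)
  have e2 : S2 f g (L+1) = ∑ ℓ ∈ Finset.Icc 0 M, s2 f g (L+1) ℓ :=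
    S2_eq_sum _ _ _ _ (by omega) hg (by omega)
  have e3 : (∑ ℓ ∈ Finset.Icc 0 M, (if ℓ = L - g + 1 then
      zchoose f (L+1) * zchoose (g+ℓ-1) ℓ else 0))
      = zchoose f (L+1) * zchoose L (L-g+1) := by
    rw [Finset.sum_ite_eq' (Finset.Icc 0 M) (L - g + 1)
      (fun ℓ => zchoose f (L+1) * zchoose (g+ℓ-1) ℓ)]
    by_cases hmem : L - g + 1 ∈ Finset.Icc 0 M
    · rw [if_pos hmem, show g + (L - g + 1) - 1 = L by ring]
    · rw [if_neg hmem]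
      have h0 : L - g + 1 < 0 := by
        simp only [Finset.mem_Icc] at hmem; omega
      rw [zc_neg _ h0, mul_zero]
  rw [e0, e1, e2, ← e3, ← Finset.sum_add_distrib, ← Finset.sum_add_distrib]
  exact Finset.sum_congr rfl (fun ℓ _ => key ℓ)

lemma S1_base (g L : ℤ) (hg : 1 ≤ g) : S1 g g L = 0 := by
  unfold S1
  rw [show (fun ℓ : ℤ => s1 g g L ℓ) = (fun _ : ℤ => (0:ℤ)) from funext fun ℓ => ?_]
  · exact finsum_zero
  · unfold s1
    split_ifs with hc
    · rw [zc_neg _ (by omega : ℓ < 0), mul_zero]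
    · rfl

lemma S2_base (g L : ℤ) (hg : 1 ≤ g) : S2 g g L = 0 := by
  unfold S2
  rw [show (fun ℓ : ℤ => s2 g g L ℓ) = (fun _ : ℤ => (0:ℤ)) from funext fun ℓ => ?_]
  · exact finsum_zero
  · unfold s2
    split_ifs with hc
    · rcases lt_or_ge ℓ 0 with h | h
      · rw [zc_neg _ h, mul_zero]
      · rw [zc_eq_zero_of_lt (by omega : (0:ℤ) ≤ g) (by omega), zero_mul]
    · rfl

lemma aux : ∀ (n : ℕ) (g L : ℤ), 1 ≤ g →
    (g.negOnePow : ℤ) * (if L = 0 then 1 else 0) * (if 2 ≤ g + (n:ℤ) then 1 else 0)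
      = zchoose (g + (n:ℤ) - 2) L * zchoose (L-1) (g-2)
        + S1 (g + (n:ℤ)) g L - S2 (g + (n:ℤ)) g L := by
  intro n
  induction n with
  | zero =>
    intro g L hg
    simp only [Nat.cast_zero, add_zero]
    rw [S1_base g L hg, S2_base g L hg]
    rcases lt_trichotomy L 0 with hL | hL | hL
    · rw [zc_neg _ hL, if_neg (by omega : ¬ (L = 0))]
      ring
    · subst hL
      rw [if_pos rfl, zc_zero, show (0:ℤ) - 1 = -1 by ring]
      by_cases hg2 : 2 ≤ g
      · rw [if_pos hg2, negOnePow_eq hg2]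
        ring
      · have hg1 : g = 1 := by omega
        subst hg1
        rw [if_neg hg2, zc_neg _ (by norm_num : (1:ℤ) - 2 < 0)]
        ring
    · rw [if_neg (by omega : ¬ (L = 0))]
      by_cases hg2 : 2 ≤ g
      · by_cases hLg : L ≤ g - 2
        · rw [zc_eq_zero_of_lt (by omega : (0:ℤ) ≤ L - 1) (by omega), mul_zero]
          ring
        · rw [zc_eq_zero_of_lt (by omega : (0:ℤ) ≤ g - 2) (by omega), zero_mul]
          ring
      · have hg1 : g = 1 := by omega
        subst hg1
        rw [zc_neg _ (by norm_num : (1:ℤ) - 2 < 0), mul_zero]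
        ring
  | succ n ih =>
    intro g L hg
    have ihL := ih g L hg
    have ihL1 := ih g (L+1) hg
    rw [show L + 1 - 1 = L by ring] at ihL1
    have harr : g + ((n:ℤ) + 1) = g + (n:ℤ) + 1 := by ring
    push_cast
    rw [harr]
    have key1 := S1_step (g + (n:ℤ)) g L hg (by omega)
    have key2 := S2_step (g + (n:ℤ)) g L hg (by omega)
    have st := star (g + (n:ℤ)) g L hg (by omega)
    have p := pascal' (g + (n:ℤ) + 1 - 2) L (g + (n:ℤ) - 2) (L-1) (by ring) rfl
    linear_combination (-1 : ℤ) * key1 + key2 - zchoose (L-1) (g-2) * p - st + ihL + ihL1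

end ZCAux


/-- For integers `f, g, L` with `1 ≤ g ≤ f`,
`(−1)^g · [L = 0] · [2 ≤ f]
  = C(f−2, L) · C(L−1, g−2)
    + ∑_{ℓ ≤ f−g−2} C(f−g, g−L+ℓ) · C(g+ℓ−1, ℓ)
    − ∑_{L−g+1 ≤ ℓ} C(f, 2ℓ+2g−L) · C(g+ℓ−1, ℓ)`,
where both sums range over integers `ℓ` and have only finitely many nonzero terms. -/
theorem binomial_identity_Cj25_1 (f g L : ℤ) (h1 : 1 ≤ g) (h2 : g ≤ f) :
    (g.negOnePow : ℤ) * (if L = 0 then 1 else 0) * (if 2 ≤ f then 1 else 0)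
      = zchoose (f - 2) L * zchoose (L - 1) (g - 2)
        + (∑ᶠ ℓ : ℤ, if ℓ ≤ f - g - 2 then
            zchoose (f - g) (g - L + ℓ) * zchoose (g + ℓ - 1) ℓ else 0)
        - ∑ᶠ ℓ : ℤ, if L - g + 1 ≤ ℓ then
            zchoose f (2 * ℓ + 2 * g - L) * zchoose (g + ℓ - 1) ℓ else 0 := by
  obtain ⟨n, hn⟩ : ∃ n : ℕ, f = g + (n : ℤ) := ⟨(f - g).toNat, by omega⟩
  subst hn
  have e1 : (∑ᶠ ℓ : ℤ, if ℓ ≤ g + (n:ℤ) - g - 2 then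
      zchoose (g + (n:ℤ) - g) (g - L + ℓ) * zchoose (g + ℓ - 1) ℓ else 0)
      = ZCAux.S1 (g + (n:ℤ)) g L := rfl
  have e2 : (∑ᶠ ℓ : ℤ, if L - g + 1 ≤ ℓ then
      zchoose (g + (n:ℤ)) (2 * ℓ + 2 * g - L) * zchoose (g + ℓ - 1) ℓ else 0)
      = ZCAux.S2 (g + (n:ℤ)) g L := rfl
  rw [e1, e2]
  exact ZCAux.aux n g L h1
end

section
/- Let g ≥ 1 and m ≥ 0 be natural numbers. Then ∑_{j=0}^{⌊m/2⌋} C(g, m−2j) · C(g+j−1, j) = C(g+m−1, m). -/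
open PowerSeries Finset

noncomputable def AA (g : ℕ) : ℤ⟦X⟧ :=
  PowerSeries.mk fun n => if Even n then ((g + n / 2 - 1).choose (n / 2) : ℤ) else 0

lemma AA_one_mul : AA 1 * (1 - X ^ 2) = 1 := by
  ext n
  rw [mul_sub, mul_one, map_sub, PowerSeries.coeff_mul_X_pow']
  rcases n with _ | _ | n
  · simp [AA]
  · simp [AA]
  · simp only [AA, coeff_mk, PowerSeries.coeff_one]
    rw [if_pos (by omega : 2 ≤ n + 2), (by omega : n + 2 - 2 = n)]
    rcases Nat.even_or_odd n with h | h
    · have h' : Even (n + 2) := by rwa [Nat.even_add_one, Nat.even_add_one, not_not]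
      have hq : (n + 2) / 2 = n / 2 + 1 := by omega
      simp [h, h', hq]
    · have h1 : ¬ Even n := Nat.not_even_iff_odd.mpr h
      have h' : ¬ Even (n + 2) := by rwa [Nat.even_add_one, Nat.even_add_one, not_not]
      simp [h1, h']

lemma AA_succ_mul (g : ℕ) (hg : 1 ≤ g) : AA (g + 1) * (1 - X ^ 2) = AA g := by
  ext n
  rw [mul_sub, mul_one, map_sub, PowerSeries.coeff_mul_X_pow']
  rcases n with _ | _ | n
  · simp [AA]
  · simp [AA]
  · simp only [AA, coeff_mk]
    rw [if_pos (by omega : 2 ≤ n + 2), (by omega : n + 2 - 2 = n)]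
    rcases Nat.even_or_odd n with h | h
    · have h' : Even (n + 2) := by rwa [Nat.even_add_one, Nat.even_add_one, not_not]
      have hq : (n + 2) / 2 = n / 2 + 1 := by omega
      simp only [h, h', if_true, hq]
      set j := n / 2
      rw [(by omega : g + 1 + (j + 1) - 1 = (g + j) + 1), (by omega : g + 1 + j - 1 = g + j),
        (by omega : g + (j + 1) - 1 = g + j)]
      have := Nat.choose_succ_succ (g + j) j
      push_cast [this]
      ring
    · have h1 : ¬ Even n := Nat.not_even_iff_odd.mpr h
      have h' : ¬ Even (n + 2) := by rwa [Nat.even_add_one, Nat.even_add_one, not_not]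
      simp [h1, h']

lemma AA_mul_pow (g : ℕ) (hg : 1 ≤ g) : AA g * (1 - X ^ 2) ^ g = 1 := by
  induction g with
  | zero => omega
  | succ g ih =>
    rcases Nat.eq_or_lt_of_le hg with h | h
    · rw [← h]; simpa using AA_one_mul
    · have hg1 : 1 ≤ g := by omega
      rw [pow_succ', ← mul_assoc, AA_succ_mul g hg1, ih hg1]

lemma coeff_one_add_X_pow_ps (g i : ℕ) :
    (PowerSeries.coeff i) (((1 : ℤ⟦X⟧) + X) ^ g) = (g.choose i : ℤ) := by
  have : ((1 : ℤ⟦X⟧) + X) ^ g = (((1 + Polynomial.X : Polynomial ℤ) ^ g : Polynomial ℤ) : ℤ⟦X⟧) := by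
    simp [Polynomial.coe_pow]
  rw [this, Polynomial.coeff_coe, Polynomial.coeff_one_add_X_pow]

lemma key_s7 (g : ℕ) (hg : 1 ≤ g) :
    ((1 : ℤ⟦X⟧) + X) ^ g * AA g = ((invOneSubPow ℤ g : ℤ⟦X⟧ˣ) : ℤ⟦X⟧) := by
  set B := ((invOneSubPow ℤ g : ℤ⟦X⟧ˣ) : ℤ⟦X⟧) with hBdef
  have hB : B * ((1 : ℤ⟦X⟧) - X) ^ g = 1 := by
    rw [hBdef, ← invOneSubPow_inv_eq_one_sub_pow]
    exact (invOneSubPow ℤ g).val_inv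
  have h1 : (((1 : ℤ⟦X⟧) + X) * (1 - X)) = 1 - X ^ 2 := by ring
  calc ((1 : ℤ⟦X⟧) + X) ^ g * AA g
      = ((1 + X) ^ g * AA g) * (B * (1 - X) ^ g) := by rw [hB, mul_one]
    _ = B * (AA g * ((1 + X) ^ g * (1 - X) ^ g)) := by ring
    _ = B * (AA g * ((1 - X ^ 2)) ^ g) := by rw [← mul_pow, h1]
    _ = B := by rw [AA_mul_pow g hg, mul_one]

lemma sum_reindex (g m : ℕ) :
    ∑ j ∈ Finset.range (m / 2 + 1),
        (g.choose (m - 2 * j) : ℤ) * ((g + j - 1).choose j : ℤ)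
      = ∑ k ∈ Finset.range (m + 1), (g.choose k : ℤ) *
          (if Even (m - k) then ((g + (m - k) / 2 - 1).choose ((m - k) / 2) : ℤ) else 0) := by
  have hsplit : ∀ k, (g.choose k : ℤ) *
      (if Even (m - k) then ((g + (m - k) / 2 - 1).choose ((m - k) / 2) : ℤ) else 0)
      = if Even (m - k) then
          (g.choose k : ℤ) * ((g + (m - k) / 2 - 1).choose ((m - k) / 2) : ℤ) else 0 := by
    intro k; split <;> simp
  simp_rw [hsplit]
  rw [← Finset.sum_filter]
  refine Finset.sum_nbij' (fun j => m - 2 * j) (fun k => (m - k) / 2) ?_ ?_ ?_ ?_ ?_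
  · intro j hj
    simp only [Finset.mem_range] at hj
    simp only [Finset.mem_filter, Finset.mem_range, Nat.even_iff]
    omega
  · intro k hk
    simp only [Finset.mem_filter, Finset.mem_range, Nat.even_iff] at hk
    simp only [Finset.mem_range]
    omega
  · intro j hj
    simp only [Finset.mem_range] at hj
    show (m - (m - 2 * j)) / 2 = j
    omega
  · intro k hk
    simp only [Finset.mem_filter, Finset.mem_range, Nat.even_iff] at hk
    show m - 2 * ((m - k) / 2) = k
    omega
  · intro j hj
    simp only [Finset.mem_range] at hj
    rw [(by omega : (m - (m - 2 * j)) / 2 = j)]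

/-- For naturals `g ≥ 1` and `m ≥ 0`,
`∑_{j=0}^{⌊m/2⌋} C(g, m−2j) · C(g+j−1, j) = C(g+m−1, m)`. -/
theorem choose_convolution (g m : ℕ) (hg : 1 ≤ g) :
    ∑ j ∈ Finset.range (m / 2 + 1), g.choose (m - 2 * j) * (g + j - 1).choose j
      = (g + m - 1).choose m := by
  have hc := congrArg (PowerSeries.coeff m) (key_s7 g hg)
  rw [invOneSubPow_val_eq_mk_sub_one_add_choose_of_pos ℤ g (by omega)] at hc
  rw [PowerSeries.coeff_mul, Finset.Nat.sum_antidiagonal_eq_sum_range_succ_mk] at hc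
  simp only [coeff_one_add_X_pow_ps, AA, coeff_mk] at hc
  have hr : (g - 1 + m).choose (g - 1) = (g + m - 1).choose m := by
    rw [(by omega : g - 1 + m = g + m - 1)]
    have h := Nat.choose_symm (n := g + m - 1) (k := m) (by omega)
    rwa [(by omega : g + m - 1 - m = g - 1)] at h
  have : ((∑ j ∈ Finset.range (m / 2 + 1),
      g.choose (m - 2 * j) * (g + j - 1).choose j : ℕ) : ℤ) = ((g + m - 1).choose m : ℤ) := by
    push_cast
    rw [sum_reindex, hc, hr]
  exact_mod_cast this
end

section
/- Let g, f be natural numbers with 1 ≤ g < f and set δ = f − g. Then ∑_{ℓ=0}^{g−2} C(ℓ+f−g−1, ℓ) + ∑_{ℓ=0}^{f−g−2} (−1)^{ℓ+δ} · C(g+ℓ−1, ℓ) = ∑_{i=0}^{⌊δ/2⌋} C(f−2−2i, δ−2i), as integers. -/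
open Finset

lemma hockey (r : ℕ) : ∀ m, ∑ ℓ ∈ range (m+1), (ℓ + r).choose ℓ = (m + 1 + r).choose m := by
  intro m
  induction m with
  | zero => simp
  | succ m ih =>
    rw [sum_range_succ, ih]
    have : m + 1 + 1 + r = (m + 1 + r) + 1 := by omega
    rw [this, Nat.choose_succ_succ]

noncomputable def Af (G d : ℕ) : ℤ := ∑ i ∈ range (d/2+1), ((G + d - 2*i).choose (d - 2*i) : ℤ)

lemma Arec (G d : ℕ) : Af G (d+2) = ((G+d+2).choose (d+2) : ℤ) + Af G d := by
  unfold Af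
  have h : (d+2)/2 + 1 = (d/2 + 1) + 1 := by omega
  rw [h, sum_range_succ']
  have e1 : ∀ i ∈ range (d/2+1), ((G + (d+2) - 2*(i+1)).choose ((d+2) - 2*(i+1)) : ℤ)
      = ((G + d - 2*i).choose (d - 2*i) : ℤ) := by
    intro i _; congr 2 <;> omega
  rw [sum_congr rfl e1]
  have e0 : G + (d+2) - 2*0 = G+d+2 := by omega
  have e0' : (d+2) - 2*0 = d+2 := by omega
  rw [e0, e0', add_comm]

lemma keyS (G : ℕ) : ∀ d, ∑ ℓ ∈ range (d-1), (-1:ℤ)^(ℓ+d) * ((G+1+ℓ).choose ℓ : ℤ)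
    = Af G d - ((G+d).choose d : ℤ) := by
  intro d
  induction d using Nat.twoStepInduction with
  | zero => simp [Af]
  | one => simp [Af]
  | more d ih _ =>
    have step : ∑ ℓ ∈ range (d+1), (-1:ℤ)^(ℓ+(d+2)) * ((G+1+ℓ).choose ℓ : ℤ)
        = (∑ ℓ ∈ range (d-1), (-1:ℤ)^(ℓ+d) * ((G+1+ℓ).choose ℓ : ℤ)) + ((G+d).choose d : ℤ) := by
      match d with
      | 0 => simp
      | (e+1) =>
        rw [sum_range_succ, sum_range_succ]
        have h1 : ∀ ℓ : ℕ, (-1:ℤ)^(ℓ+(e+1+2)) = (-1:ℤ)^(ℓ+(e+1)) := by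
          intro ℓ
          have : ℓ+(e+1+2) = (ℓ+(e+1)) + 2 := by omega
          rw [this, pow_add]; ring_nf
        have h2 : ∑ ℓ ∈ range e, (-1:ℤ)^(ℓ+(e+1+2)) * ((G+1+ℓ).choose ℓ : ℤ)
            = ∑ ℓ ∈ range (e+1-1), (-1:ℤ)^(ℓ+(e+1)) * ((G+1+ℓ).choose ℓ : ℤ) := by
          apply sum_congr (by norm_num)
          intro ℓ _; rw [h1]
        rw [h2, h1 e]
        have hs1 : (-1:ℤ)^(e+(e+1)) = -1 := Odd.neg_one_pow ⟨e, by omega⟩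
        have hs2 : (-1:ℤ)^(e+1+(e+1+2)) = 1 := Even.neg_one_pow ⟨e+2, by omega⟩
        rw [hs1, hs2]
        have hpas : ((G+1+(e+1)).choose (e+1) : ℤ)
            = ((G+1+e).choose e : ℤ) + ((G+1+e).choose (e+1) : ℤ) := by
          have h3 : G+1+(e+1) = (G+1+e)+1 := by omega
          rw [h3]
          exact_mod_cast Nat.choose_succ_succ (G+1+e) e
        rw [hpas]
        have he : G+(e+1) = G+1+e := by omega
        rw [he]
        ring
    have hr : (d+2) - 1 = d + 1 := by omega
    rw [hr, step, ih, Arec]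
    have : G + (d+2) = G+d+2 := by omega
    rw [this]
    ring

lemma g1case (e : ℕ) : ∑ ℓ ∈ range e, (-1:ℤ)^(ℓ+(e+1))
    = ∑ i ∈ range ((e+1)/2+1), ((e - 2*i).choose (e+1 - 2*i) : ℤ) := by
  have hl : ∑ ℓ ∈ range e, (-1:ℤ)^(ℓ+(e+1)) = (-1)^(e+1) * ∑ ℓ ∈ range e, (-1:ℤ)^ℓ := by
    rw [mul_sum]
    apply sum_congr rfl
    intro ℓ _
    rw [← pow_add]; ring_nf
  rcases Nat.even_or_odd e with he | he
  · obtain ⟨k, hk⟩ := he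
    rw [hl, neg_one_geom_sum, if_pos ⟨k, hk⟩, mul_zero]
    symm
    apply sum_eq_zero
    intro i hi
    simp only [mem_range] at hi
    have : (e - 2*i).choose (e+1 - 2*i) = 0 :=
      Nat.choose_eq_zero_of_lt (by omega)
    rw [this]; norm_num
  · obtain ⟨k, hk⟩ := he
    rw [hl, neg_one_geom_sum, if_neg (by simp [hk, parity_simps] : ¬ Even e)]
    have hE : Even (e+1) := ⟨k+1, by omega⟩
    rw [Even.neg_one_pow hE, mul_one]
    have hr : (e+1)/2 + 1 = (k+1) + 1 := by omega
    rw [hr, sum_range_succ]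
    have h0 : ∑ i ∈ range (k+1), ((e - 2*i).choose (e+1 - 2*i) : ℤ) = 0 := by
      apply sum_eq_zero
      intro i hi
      simp only [mem_range] at hi
      have : (e - 2*i).choose (e+1 - 2*i) = 0 :=
        Nat.choose_eq_zero_of_lt (by omega)
      rw [this]; norm_num
    rw [h0]
    have h1 : e - 2*(k+1) = 0 := by omega
    have h2 : e + 1 - 2*(k+1) = 0 := by omega
    rw [h1, h2]
    norm_num

/-- For naturals `1 ≤ g < f` with `δ = f − g`,
`∑_{ℓ=0}^{g−2} C(ℓ+f−g−1, ℓ) + ∑_{ℓ=0}^{f−g−2} (−1)^{ℓ+δ} · C(g+ℓ−1, ℓ)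
  = ∑_{i=0}^{⌊δ/2⌋} C(f−2−2i, δ−2i)` as integers. -/
theorem multiplicity_formula (g f : ℕ) (h1 : 1 ≤ g) (h2 : g < f) (δ : ℕ) (hδ : δ = f - g) :
    (∑ ℓ ∈ Finset.range (g - 1), ((ℓ + f - g - 1).choose ℓ : ℤ))
      + ∑ ℓ ∈ Finset.range (f - g - 1), (-1 : ℤ) ^ (ℓ + δ) * ((g + ℓ - 1).choose ℓ : ℤ)
      = ∑ i ∈ Finset.range (δ / 2 + 1), ((f - 2 - 2 * i).choose (δ - 2 * i) : ℤ) := by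
  obtain ⟨e, rfl⟩ : ∃ e, f = g + (e+1) := ⟨f - g - 1, by omega⟩
  have hδ' : δ = e + 1 := by omega
  subst hδ'
  rcases g with _ | _ | G
  · omega
  · -- g = 1
    have hr1 : (1:ℕ) - 1 = 0 := rfl
    have hr2 : 1 + (e+1) - 1 - 1 = e := by omega
    rw [hr1, hr2]
    simp only [range_zero, sum_empty, zero_add]
    have hs : ∑ ℓ ∈ range e, (-1:ℤ)^(ℓ+(e+1)) * ((1 + ℓ - 1).choose ℓ : ℤ)
        = ∑ ℓ ∈ range e, (-1:ℤ)^(ℓ+(e+1)) := by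
      apply sum_congr rfl
      intro ℓ _
      have : 1 + ℓ - 1 = ℓ := by omega
      rw [this, Nat.choose_self]; norm_num
    rw [hs, g1case]
    apply sum_congr rfl
    intro i _
    congr 2 ; omega
  · -- g = G + 2
    have hr1 : G + 2 - 1 = G + 1 := by omega
    have hr2 : G + 2 + (e+1) - (G+2) - 1 = e := by omega
    rw [hr1, hr2]
    have hfirst : ∑ ℓ ∈ range (G+1), ((ℓ + (G+2+(e+1)) - (G+2) - 1).choose ℓ : ℤ)
        = ((G+1+e).choose G : ℤ) := by
      have : ∑ ℓ ∈ range (G+1), (ℓ + e).choose ℓ = (G+1+e).choose G := hockey e G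
      rw [← this]
      push_cast
      apply sum_congr rfl
      intro ℓ _
      congr 2
      omega
    have hsecond : ∑ ℓ ∈ range e, (-1:ℤ)^(ℓ+(e+1)) * ((G+2+ℓ-1).choose ℓ : ℤ)
        = Af G (e+1) - ((G+(e+1)).choose (e+1) : ℤ) := by
      have h := keyS G (e+1)
      have hre : (e+1) - 1 = e := rfl
      rw [hre] at h
      rw [← h]
      apply sum_congr rfl
      intro ℓ _
      congr 3
      omega
    rw [hfirst, hsecond]
    have hrhs : ∑ i ∈ range ((e+1)/2+1), ((G+2+(e+1) - 2 - 2*i).choose (e+1 - 2*i) : ℤ)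
        = Af G (e+1) := by
      unfold Af
      apply sum_congr rfl
      intro i _
      congr 2
      omega
    rw [hrhs]
    have hsymm : (G+1+e).choose G = (G+(e+1)).choose (e+1) := by
      have h := Nat.choose_symm (by omega : e+1 ≤ G+(e+1))
      have : G + (e+1) - (e+1) = G := by omega
      rw [this] at h
      rw [← h]
      congr 1
      omega
    rw [hsymm]
    ring
end

section
/- Let ε, M, j be integers with 0 ≤ ε ≤ M and 0 ≤ j ≤ M. Then ∑_{J=ε}^{M} (−1)^J · C(J−1−j, J−ε) · C(M−j, J−j) = (−1)^ε. -/
lemma zchoose_of_nonneg (x : ℤ) {k : ℤ} (hk : 0 ≤ k) :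
    zchoose x k = Ring.choose x k.toNat := if_pos hk

/-- Reflection identity for the generalized binomial coefficient over `ℤ`. -/
lemma ring_choose_reflect (x : ℤ) (k : ℕ) :
    Ring.choose x k = (-1 : ℤ) ^ k * Ring.choose ((k : ℤ) - 1 - x) k := by
  have key : (descPochhammer ℤ k).smeval x
      = (-1 : ℤ) ^ k * (descPochhammer ℤ k).smeval ((k : ℤ) - 1 - x) := by
    rw [← Polynomial.eval_eq_smeval, ← Polynomial.eval_eq_smeval,
      descPochhammer_eval_eq_ascPochhammer ℤ ((k : ℤ) - 1 - x) k,
      show ((k : ℤ) - 1 - x - k + 1 : ℤ) = -x by ring,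
      ascPochhammer_eval_neg_eq_descPochhammer ℤ x k]
    rw [← mul_assoc, ← mul_pow]
    simp
  refine nsmul_right_injective (n := Nat.factorial k) (Nat.factorial_ne_zero k) ?_
  simp only
  rw [← Ring.descPochhammer_eq_factorial_smul_choose, key,
    Ring.descPochhammer_eq_factorial_smul_choose, nsmul_eq_mul, nsmul_eq_mul]
  ring

/-- For integers `ε, M, j` with `0 ≤ ε ≤ M` and `0 ≤ j ≤ M`,
`∑_{J=ε}^{M} (−1)^J · C(J−1−j, J−ε) · C(M−j, J−j) = (−1)^ε`. -/
theorem xi_sign_identity (ε M j : ℤ) (h1 : 0 ≤ ε) (h2 : ε ≤ M) (h3 : 0 ≤ j) (h4 : j ≤ M) :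
    ∑ J ∈ Finset.Icc ε M,
        (J.negOnePow : ℤ) * zchoose (J - 1 - j) (J - ε) * zchoose (M - j) (J - j)
      = (ε.negOnePow : ℤ) := by
  -- Step 1: rewrite each term, removing the sign via the reflection identity.
  have hterm : ∀ J ∈ Finset.Icc ε M,
      (J.negOnePow : ℤ) * zchoose (J - 1 - j) (J - ε) * zchoose (M - j) (J - j)
        = (ε.negOnePow : ℤ) * (zchoose (j - ε) (J - ε) * zchoose (M - j) (J - j)) := by
    intro J hJ
    rw [Finset.mem_Icc] at hJ
    have hJε : (0 : ℤ) ≤ J - ε := by omega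
    have hk : ((J - ε).toNat : ℤ) = J - ε := Int.toNat_of_nonneg hJε
    rw [zchoose_of_nonneg _ hJε, zchoose_of_nonneg _ hJε,
      ring_choose_reflect (J - 1 - j) (J - ε).toNat,
      show (((J - ε).toNat : ℤ) - 1 - (J - 1 - j)) = j - ε by omega]
    have hsign : (J.negOnePow : ℤ) * (-1 : ℤ) ^ (J - ε).toNat = (ε.negOnePow : ℤ) := by
      rw [← Int.coe_negOnePow_natCast, hk, ← Units.val_mul, ← Int.negOnePow_add]
      congr 1
      rw [Int.negOnePow_eq_iff]
      exact ⟨J - ε, by ring⟩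
    calc (J.negOnePow : ℤ) * ((-1 : ℤ) ^ (J - ε).toNat * Ring.choose (j - ε) (J - ε).toNat)
          * zchoose (M - j) (J - j)
        = ((J.negOnePow : ℤ) * (-1 : ℤ) ^ (J - ε).toNat)
            * (Ring.choose (j - ε) (J - ε).toNat * zchoose (M - j) (J - j)) := by ring
      _ = _ := by rw [hsign]
  rw [Finset.sum_congr rfl hterm, ← Finset.mul_sum]
  -- Step 2: it remains to show the unsigned sum equals 1.
  suffices h : ∑ J ∈ Finset.Icc ε M, zchoose (j - ε) (J - ε) * zchoose (M - j) (J - j) = 1 by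
    rw [h, mul_one]
  -- Step 3: Chu–Vandermonde.
  set n : ℕ := (M - ε).toNat with hn
  have hnZ : (n : ℤ) = M - ε := Int.toNat_of_nonneg (by omega)
  have hV := Ring.add_choose_eq (R := ℤ) (r := j - ε) (s := M - j) n (Commute.all _ _)
  have hLHS : Ring.choose ((j - ε) + (M - j)) n = 1 := by
    rw [show (j - ε) + (M - j) = ((n : ℤ)) by omega, Ring.choose_natCast, Nat.choose_self,
      Nat.cast_one]
  rw [hLHS] at hV
  conv_rhs => rw [hV]
  refine Finset.sum_nbij' (fun J => ((J - ε).toNat, (M - J).toNat))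
    (fun ij => ε + ij.1) ?_ ?_ ?_ ?_ ?_
  · intro J hJ
    rw [Finset.mem_Icc] at hJ
    rw [Finset.HasAntidiagonal.mem_antidiagonal]
    dsimp only
    omega
  · intro ij hij
    rw [Finset.HasAntidiagonal.mem_antidiagonal] at hij
    rw [Finset.mem_Icc]
    omega
  · intro J hJ
    rw [Finset.mem_Icc] at hJ
    dsimp only
    omega
  · intro ij hij
    obtain ⟨a, b⟩ := ij
    rw [Finset.HasAntidiagonal.mem_antidiagonal] at hij
    simp only [Prod.mk.injEq]
    omega
  · intro J hJ
    rw [Finset.mem_Icc] at hJ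
    dsimp only
    have hJε : (0 : ℤ) ≤ J - ε := by omega
    rw [zchoose_of_nonneg _ hJε]
    congr 1
    -- second factor
    by_cases hjJ : j ≤ J
    · rw [zchoose_of_nonneg _ (by omega : (0:ℤ) ≤ J - j)]
      have hMj : ((M - j).toNat : ℤ) = M - j := Int.toNat_of_nonneg (by omega)
      rw [show (M - j : ℤ) = ((M - j).toNat : ℤ) from hMj.symm, Ring.choose_natCast,
        Ring.choose_natCast]
      rw [show (M - J).toNat = (M - j).toNat - (J - j).toNat by omega,
        Nat.choose_symm (by omega)]
    · rw [show zchoose (M - j) (J - j) = 0 from if_neg (by omega)]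
      have hMj : ((M - j).toNat : ℤ) = M - j := Int.toNat_of_nonneg (by omega)
      rw [show (M - j : ℤ) = ((M - j).toNat : ℤ) from hMj.symm, Ring.choose_natCast]
      rw [Nat.choose_eq_zero_of_lt (by omega)]
      simp
end

section
/- Let R be a commutative Noetherian ring and I a proper ideal of R. Suppose K₁ and K₂ are ideals of R containing I such that, for each i, the ideal Kᵢ is grade unmixed, grade Kᵢ = grade I, and grade I < grade (I : Kᵢ). Then K₁ = K₂. -/
open Classical

/-- The grade of an ideal `I` in a commutative ring: the supremum of the lengths of
`R`-regular sequences contained in `I`, with the unit ideal assigned infinite grade. -/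

noncomputable def Ideal.grade' {R : Type*} [CommRing R] (I : Ideal R) : ℕ∞ :=
  if I = ⊤ then ⊤
  else sSup {n : ℕ∞ | ∃ rs : List R, (∀ r ∈ rs, r ∈ I) ∧
    RingTheory.Sequence.IsRegular R rs ∧ (rs.length : ℕ∞) = n}

/-- An ideal `I` is grade unmixed if `grade 𝔭 = grade I` for every associated prime `𝔭`
of `R/I`. -/
def Ideal.IsGradeUnmixed {R : Type*} [CommRing R] (I : Ideal R) : Prop :=
  ∀ p ∈ associatedPrimes R (R ⧸ I), Ideal.grade' p = Ideal.grade' I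

lemma Ideal.grade'_mono {R : Type*} [CommRing R] {I J : Ideal R} (h : I ≤ J) :
    I.grade' ≤ J.grade' := by
  unfold Ideal.grade'
  by_cases hJ : J = ⊤
  · simp [hJ]
  · have hI : I ≠ ⊤ := fun hI => hJ (top_le_iff.mp (hI ▸ h))
    rw [if_neg hI, if_neg hJ]
    exact sSup_le_sSup fun n ⟨rs, h1, h2, h3⟩ => ⟨rs, fun r hr => h (h1 r hr), h2, h3⟩

lemma grade_unmixed_part_le {R : Type*} [CommRing R] [IsNoetherianRing R]
    (I K₁ K₂ : Ideal R)
    (h2le : I ≤ K₂) (h2u : K₂.IsGradeUnmixed) (h2g : K₂.grade' = I.grade')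
    (h1c : I.grade' < (Submodule.colon I K₁).grade') :
    K₁ ≤ K₂ := by
  intro x hx
  by_contra hxK₂
  have hx0 : (Ideal.Quotient.mk K₂ x : R ⧸ K₂) ≠ 0 := fun h =>
    hxK₂ (Ideal.Quotient.eq_zero_iff_mem.mp h)
  obtain ⟨p, hp, hle⟩ :=
    exists_le_isAssociatedPrime_of_isNoetherianRing R (Ideal.Quotient.mk K₂ x) hx0
  have hcol : Submodule.colon I K₁ ≤ p := by
    intro c hc
    apply hle
    rw [Submodule.mem_colon_singleton, Submodule.mem_bot]
    have hcx : c * x ∈ K₂ := h2le (Submodule.mem_colon.mp hc x hx)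
    show c • (Ideal.Quotient.mk K₂ x) = 0
    have : c • (Ideal.Quotient.mk K₂ x) = Ideal.Quotient.mk K₂ (c * x) := rfl
    rw [this]
    exact Ideal.Quotient.eq_zero_iff_mem.mpr hcx
  have : I.grade' < I.grade' := by
    calc I.grade' < (Submodule.colon I K₁).grade' := h1c
      _ ≤ p.grade' := Ideal.grade'_mono hcol
      _ = K₂.grade' := h2u p hp
      _ = I.grade' := h2g
  exact lt_irrefl _ this

/-- Uniqueness of the grade unmixed part: if `K₁` and `K₂` both contain `I`, are grade
unmixed, have the same grade as `I`, and satisfy `grade I < grade (I : Kᵢ)`, then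
`K₁ = K₂`. -/
theorem grade_unmixed_part_unique {R : Type*} [CommRing R] [IsNoetherianRing R]
    (I K₁ K₂ : Ideal R) (hI : I ≠ ⊤)
    (h1le : I ≤ K₁) (h2le : I ≤ K₂)
    (h1u : K₁.IsGradeUnmixed) (h2u : K₂.IsGradeUnmixed)
    (h1g : K₁.grade' = I.grade') (h2g : K₂.grade' = I.grade')
    (h1c : I.grade' < (Submodule.colon I K₁).grade')
    (h2c : I.grade' < (Submodule.colon I K₂).grade') :
    K₁ = K₂ :=
  le_antisymm (grade_unmixed_part_le I K₁ K₂ h2le h2u h2g h1c)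
    (grade_unmixed_part_le I K₂ K₁ h1le h1u h1g h2c)
end
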